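/- Let k ≥ 1 be an integer and α, β ∈ (0,1). If α ≤ β(k+1)²/(4kβ + (k−1)²), then z = 1 is the unique solution z > 0 of the equation z = ((β + (1−β)z)/(α + (1−α)z))^k. -/

import Mathlib

private lemma Qnonneg (K α β : ℝ) (hK : 1 ≤ K) (hα0 : 0 < α) (hα1 : α < 1)
    (hβ0 : 0 < β) (hβ1 : β < 1)
    (hc : α * (4 * K * β + (K - 1) ^ 2) ≤ β * (K + 1) ^ 2) :
    ∀ x : ℝ, 0 < x →
      0 ≤ (1 - α) * (1 - β) * x ^ 2 + (α + β - 2 * α * β - K * (α - β)) * x + α * β := by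
  intro x hx
  rcases le_or_gt 0 (α + β - 2 * α * β - K * (α - β)) with hB | hB
  · nlinarith [mul_pos (sub_pos.2 hα1) (sub_pos.2 hβ1), mul_pos hα0 hβ0,
      mul_nonneg hB hx.le, sq_nonneg x]
  · have hd : 0 < α - β := by nlinarith
    have hcc : 0 ≤ β * (K + 1) ^ 2 - α * (4 * K * β + (K - 1) ^ 2) := by linarith
    nlinarith [sq_nonneg (2 * ((1 - α) * (1 - β)) * x + (α + β - 2 * α * β - K * (α - β))),
      mul_nonneg hd.le hcc, mul_pos (sub_pos.2 hα1) (sub_pos.2 hβ1)]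

private lemma quad_two_roots {A B C t₁ t₂ : ℝ} (hA : 0 < A) (h12 : t₁ < t₂)
    (h1 : A * t₁ ^ 2 + B * t₁ + C = 0) (h2 : A * t₂ ^ 2 + B * t₂ + C = 0)
    (hm : 0 ≤ A * ((t₁ + t₂) / 2) ^ 2 + B * ((t₁ + t₂) / 2) + C) : False := by
  nlinarith [mul_pos hA (mul_pos (sub_pos.2 h12) (sub_pos.2 h12))]

theorem stmt4 (k : ℕ) (hk : 1 ≤ k) (α β : ℝ)
    (hα : α ∈ Set.Ioo (0 : ℝ) 1) (hβ : β ∈ Set.Ioo (0 : ℝ) 1)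
    (hle : α ≤ β * ((k : ℝ) + 1) ^ 2 / (4 * k * β + ((k : ℝ) - 1) ^ 2)) :
    ∀ z : ℝ, 0 < z →
      (z = ((β + (1 - β) * z) / (α + (1 - α) * z)) ^ k ↔ z = 1) := by
  obtain ⟨hα0, hα1⟩ := hα
  obtain ⟨hβ0, hβ1⟩ := hβ
  set K : ℝ := (k : ℝ) with hKdef
  have hK1 : (1 : ℝ) ≤ K := by rw [hKdef]; exact_mod_cast hk
  have hKpos : 0 < K := lt_of_lt_of_le one_pos hK1
  have hdenpos : 0 < 4 * K * β + (K - 1) ^ 2 := by positivity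
  have hc : α * (4 * K * β + (K - 1) ^ 2) ≤ β * (K + 1) ^ 2 := by
    rw [← le_div_iff₀ hdenpos]
    exact hle
  have hnum : ∀ x : ℝ, 0 < x → 0 < β + (1 - β) * x := fun x hx => by nlinarith
  have hden : ∀ x : ℝ, 0 < x → 0 < α + (1 - α) * x := fun x hx => by nlinarith
  set g : ℝ → ℝ := fun x =>
    K * Real.log (β + (1 - β) * x) - K * Real.log (α + (1 - α) * x) - Real.log x with hgdef
  set Q : ℝ → ℝ := fun x =>
    (1 - α) * (1 - β) * x ^ 2 + (α + β - 2 * α * β - K * (α - β)) * x + α * β with hQdef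
  have hQ : ∀ x : ℝ, 0 < x → 0 ≤ Q x := Qnonneg K α β hK1 hα0 hα1 hβ0 hβ1 hc
  have hderiv : ∀ x : ℝ, 0 < x →
      HasDerivAt g (-(Q x) / (x * (β + (1 - β) * x) * (α + (1 - α) * x))) x := by
    intro x hx
    have hb := hnum x hx
    have ha := hden x hx
    have h1 : HasDerivAt (fun x : ℝ => β + (1 - β) * x) (1 - β) x := by
      simpa using ((hasDerivAt_id x).const_mul (1 - β)).const_add β
    have h2 : HasDerivAt (fun x : ℝ => α + (1 - α) * x) (1 - α) x := by
      simpa using ((hasDerivAt_id x).const_mul (1 - α)).const_add α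
    have hl1 : HasDerivAt (fun x : ℝ => Real.log (β + (1 - β) * x))
        ((β + (1 - β) * x)⁻¹ * (1 - β)) x :=
      by have := (Real.hasDerivAt_log hb.ne').comp x h1; exact this
    have hl2 : HasDerivAt (fun x : ℝ => Real.log (α + (1 - α) * x))
        ((α + (1 - α) * x)⁻¹ * (1 - α)) x :=
      by have := (Real.hasDerivAt_log ha.ne').comp x h2; exact this
    have hl3 : HasDerivAt Real.log x⁻¹ x := Real.hasDerivAt_log hx.ne'
    have h := ((hl1.const_mul K).sub (hl2.const_mul K)).sub hl3
    refine h.congr_deriv ?_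
    rw [hQdef]
    field_simp
    ring
  have hanti : AntitoneOn g (Set.Ioi (0 : ℝ)) := by
    apply antitoneOn_of_deriv_nonpos (convex_Ioi 0)
    · intro x hx
      exact ((hderiv x hx).differentiableAt).continuousAt.continuousWithinAt
    · rw [interior_Ioi]
      intro x hx
      exact ((hderiv x hx).differentiableAt).differentiableWithinAt
    · rw [interior_Ioi]
      intro x hx
      rw [(hderiv x hx).deriv]
      apply div_nonpos_of_nonpos_of_nonneg
      · simpa using hQ x hx
      · exact (mul_pos (mul_pos hx (hnum x hx)) (hden x hx)).le
  have hg1 : g 1 = 0 := by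
    have e1 : β + (1 - β) * (1 : ℝ) = 1 := by ring
    have e2 : α + (1 - α) * (1 : ℝ) = 1 := by ring
    show K * Real.log (β + (1 - β) * 1) - K * Real.log (α + (1 - α) * 1) - Real.log 1 = 0
    rw [e1, e2, Real.log_one]; ring
  -- two zeros of g give a contradiction
  have key : ∀ a b : ℝ, 0 < a → a < b → g a = 0 → g b = 0 → False := by
    intro a b ha hab hga hgb
    have hzero : ∀ t : ℝ, t ∈ Set.Ioo a b → g t = 0 := by
      intro t ht
      have h1 : g t ≤ g a := hanti (Set.mem_Ioi.2 ha) (Set.mem_Ioi.2 (ha.trans ht.1)) ht.1.le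
      have h2 : g b ≤ g t := hanti (Set.mem_Ioi.2 (ha.trans ht.1))
        (Set.mem_Ioi.2 (ha.trans (ht.1.trans ht.2))) ht.2.le
      rw [hga] at h1; rw [hgb] at h2; linarith
    have hQzero : ∀ t : ℝ, t ∈ Set.Ioo a b → Q t = 0 := by
      intro t ht
      have htpos : 0 < t := ha.trans ht.1
      have hev : g =ᶠ[nhds t] (fun _ => (0 : ℝ)) := by
        filter_upwards [Ioo_mem_nhds ht.1 ht.2] with s hs
        exact hzero s hs
      have h0 : HasDerivAt g 0 t :=
        (hasDerivAt_const t (0 : ℝ)).congr_of_eventuallyEq hev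
      have hu := (hderiv t htpos).unique h0
      have hDpos : 0 < t * (β + (1 - β) * t) * (α + (1 - α) * t) :=
        mul_pos (mul_pos htpos (hnum t htpos)) (hden t htpos)
      rcases div_eq_zero_iff.1 hu with h | h
      · linarith [neg_eq_zero.1 h]
      · exact absurd h hDpos.ne'
    -- pick two points
    set t₁ : ℝ := a + (b - a) / 3 with ht1def
    set t₂ : ℝ := a + 2 * (b - a) / 3 with ht2def
    have ht₁ : t₁ ∈ Set.Ioo a b := by constructor <;> [skip; skip] <;> rw [ht1def] <;> linarith
    have ht₂ : t₂ ∈ Set.Ioo a b := by constructor <;> [skip; skip] <;> rw [ht2def] <;> linarith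
    have hq1 := hQzero t₁ ht₁
    have hq2 := hQzero t₂ ht₂
    have hm : 0 ≤ Q ((t₁ + t₂) / 2) := hQ _ (by rw [ht1def, ht2def]; linarith)
    rw [hQdef] at hq1 hq2 hm
    simp only at hq1 hq2 hm
    have hA : 0 < (1 - α) * (1 - β) := mul_pos (sub_pos.2 hα1) (sub_pos.2 hβ1)
    have ht12 : t₁ < t₂ := by rw [ht1def, ht2def]; linarith
    exact quad_two_roots hA ht12 hq1 hq2 hm
  intro z hz
  constructor
  · intro hz1
    by_contra hne
    have hgz : g z = 0 := by
      have hlz : Real.log z =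
          K * (Real.log (β + (1 - β) * z) - Real.log (α + (1 - α) * z)) := by
        calc Real.log z
            = Real.log (((β + (1 - β) * z) / (α + (1 - α) * z)) ^ k) := by rw [← hz1]
          _ = K * Real.log ((β + (1 - β) * z) / (α + (1 - α) * z)) := Real.log_pow _ _
          _ = K * (Real.log (β + (1 - β) * z) - Real.log (α + (1 - α) * z)) := by
              rw [Real.log_div (hnum z hz).ne' (hden z hz).ne']
      show K * Real.log (β + (1 - β) * z) - K * Real.log (α + (1 - α) * z) - Real.log z = 0
      rw [hlz]; ring
    rcases lt_or_gt_of_ne hne with h | h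
    · exact key z 1 hz h hgz hg1
    · exact key 1 z one_pos h hg1 hgz
  · intro h
    rw [h]
    norm_num
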